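/- arXiv:1602.00436 — 2 statements merged into one kernel-verified Lean document; each statement's English description precedes it below -/
import Mathlib

section
/- For all real x with 0 < |x| < π/2, ((sin x / x)^2 + (tan x)/x)/2 > (sin x / x)^2 · (tan x / x) > (2·(sin x / x) + (tan x)/x)/3. -/
open Real

private lemma aux_nonneg (f f' : ℝ → ℝ) (hder : ∀ t, HasDerivAt f (f' t) t)
    (h0 : f 0 = 0) (hd : ∀ t, 0 ≤ t → 0 ≤ f' t) {x : ℝ} (hx : 0 ≤ x) : 0 ≤ f x := by
  have hm : MonotoneOn f (Set.Ici 0) := by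
    apply monotoneOn_of_deriv_nonneg (convex_Ici 0)
      (fun t _ => (hder t).continuousAt.continuousWithinAt)
      (fun t _ => (hder t).differentiableAt.differentiableWithinAt)
    intro t ht
    rw [(hder t).deriv]
    exact hd t (le_of_lt (by simpa using ht))
  calc (0:ℝ) = f 0 := h0.symm
    _ ≤ f x := hm Set.self_mem_Ici hx hx

private lemma sin_le' {x : ℝ} (hx : 0 ≤ x) : sin x ≤ x := by
  rcases eq_or_lt_of_le hx with h | h
  · simp [← h]
  · exact (Real.sin_lt h).le

private lemma s3 {x : ℝ} (hx : 0 ≤ x) : x - x ^ 3 / 6 ≤ sin x := by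
  have := aux_nonneg (fun t => Real.sin t - t + t ^ 3 / 6)
    (fun t => Real.cos t - 1 + t ^ 2 / 2)
    (fun t => by
      have h := ((Real.hasDerivAt_sin t).sub (hasDerivAt_id t)).add
        ((hasDerivAt_pow 3 t).div_const 6)
      exact h.congr_deriv (by simp; ring))
    (by simp)
    (fun t _ => by nlinarith [Real.one_sub_sq_div_two_le_cos (x := t)]) hx
  linarith

private lemma c4 {x : ℝ} (hx : 0 ≤ x) : cos x ≤ 1 - x ^ 2 / 2 + x ^ 4 / 24 := by
  have := aux_nonneg (fun t => 1 - t ^ 2 / 2 + t ^ 4 / 24 - Real.cos t)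
    (fun t => -t + t ^ 3 / 6 + Real.sin t)
    (fun t => by
      have h := (((hasDerivAt_const t (1:ℝ)).sub ((hasDerivAt_pow 2 t).div_const 2)).add
        ((hasDerivAt_pow 4 t).div_const 24)).sub (Real.hasDerivAt_cos t)
      exact h.congr_deriv (by simp; ring))
    (by simp)
    (fun t ht => by nlinarith [s3 ht]) hx
  linarith

private lemma s5 {x : ℝ} (hx : 0 ≤ x) : sin x ≤ x - x ^ 3 / 6 + x ^ 5 / 120 := by
  have := aux_nonneg (fun t => t - t ^ 3 / 6 + t ^ 5 / 120 - Real.sin t)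
    (fun t => 1 - t ^ 2 / 2 + t ^ 4 / 24 - Real.cos t)
    (fun t => by
      have h := (((hasDerivAt_id t).sub ((hasDerivAt_pow 3 t).div_const 6)).add
        ((hasDerivAt_pow 5 t).div_const 120)).sub (Real.hasDerivAt_sin t)
      exact h.congr_deriv (by simp; ring))
    (by simp)
    (fun t ht => by nlinarith [c4 ht]) hx
  linarith

private lemma c6 {x : ℝ} (hx : 0 ≤ x) : 1 - x ^ 2 / 2 + x ^ 4 / 24 - x ^ 6 / 720 ≤ cos x := by
  have := aux_nonneg (fun t => Real.cos t - 1 + t ^ 2 / 2 - t ^ 4 / 24 + t ^ 6 / 720)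
    (fun t => -Real.sin t + t - t ^ 3 / 6 + t ^ 5 / 120)
    (fun t => by
      have h := ((((Real.hasDerivAt_cos t).sub (hasDerivAt_const t (1:ℝ))).add
        ((hasDerivAt_pow 2 t).div_const 2)).sub ((hasDerivAt_pow 4 t).div_const 24)).add
        ((hasDerivAt_pow 6 t).div_const 720)
      exact h.congr_deriv (by simp; ring))
    (by simp)
    (fun t ht => by nlinarith [s5 ht]) hx
  linarith

private lemma s7 {x : ℝ} (hx : 0 ≤ x) :
    x - x ^ 3 / 6 + x ^ 5 / 120 - x ^ 7 / 5040 ≤ sin x := by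
  have := aux_nonneg (fun t => Real.sin t - t + t ^ 3 / 6 - t ^ 5 / 120 + t ^ 7 / 5040)
    (fun t => Real.cos t - 1 + t ^ 2 / 2 - t ^ 4 / 24 + t ^ 6 / 720)
    (fun t => by
      have h := ((((Real.hasDerivAt_sin t).sub (hasDerivAt_id t)).add
        ((hasDerivAt_pow 3 t).div_const 6)).sub ((hasDerivAt_pow 5 t).div_const 120)).add
        ((hasDerivAt_pow 7 t).div_const 5040)
      exact h.congr_deriv (by simp; ring))
    (by simp)
    (fun t ht => by nlinarith [c6 ht]) hx
  linarith

private lemma c8 {x : ℝ} (hx : 0 ≤ x) :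
    cos x ≤ 1 - x ^ 2 / 2 + x ^ 4 / 24 - x ^ 6 / 720 + x ^ 8 / 40320 := by
  have := aux_nonneg
    (fun t => 1 - t ^ 2 / 2 + t ^ 4 / 24 - t ^ 6 / 720 + t ^ 8 / 40320 - Real.cos t)
    (fun t => -t + t ^ 3 / 6 - t ^ 5 / 120 + t ^ 7 / 5040 + Real.sin t)
    (fun t => by
      have h := (((((hasDerivAt_const t (1:ℝ)).sub ((hasDerivAt_pow 2 t).div_const 2)).add
        ((hasDerivAt_pow 4 t).div_const 24)).sub ((hasDerivAt_pow 6 t).div_const 720)).add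
        ((hasDerivAt_pow 8 t).div_const 40320)).sub (Real.hasDerivAt_cos t)
      exact h.congr_deriv (by simp; ring))
    (by simp)
    (fun t ht => by nlinarith [s7 ht]) hx
  linarith

/-- Core of the first inequality: `x² + x sin x cos x - 2 sin²x > 0` via `y = 2x`. -/
private lemma coreA {x : ℝ} (hx : 0 < x) (hx2 : x < π / 2) :
    0 < x ^ 2 + x * sin x * cos x - 2 * sin x ^ 2 := by
  have hy0 : (0:ℝ) < 2 * x := by positivity
  have hyπ : 2 * x < π := by linarith
  have hπ : π < 3.15 := Real.pi_lt_d2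
  have hs : 2*x - (2*x) ^ 3 / 6 + (2*x) ^ 5 / 120 - (2*x) ^ 7 / 5040 ≤ sin (2*x) := s7 hy0.le
  have hc : 1 - (2*x) ^ 2 / 2 + (2*x) ^ 4 / 24 - (2*x) ^ 6 / 720 ≤ cos (2*x) := c6 hy0.le
  have hys := mul_le_mul_of_nonneg_left hs hy0.le
  have hy2 : (2*x) ^ 2 ≤ 9.9225 := by nlinarith
  have h8 := mul_le_mul_of_nonneg_left hy2 (pow_nonneg hy0.le 6)
  have h6 := pow_pos hy0 6
  have hg : 0 < (2*x) ^ 2 + (2*x) * sin (2*x) + 4 * cos (2*x) - 4 := by nlinarith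
  have h1 : sin (2*x) = 2 * sin x * cos x := Real.sin_two_mul x
  have h2 : cos (2*x) = 1 - 2 * sin x ^ 2 := by
    rw [Real.cos_two_mul]; linarith [Real.sin_sq_add_cos_sq x]
  rw [h1, h2] at hg
  nlinarith [hg]

/-- Core of the second inequality: `3 sin²x - x²(1 + 2 cos x) > 0`. -/
private lemma coreB {x : ℝ} (hx : 0 < x) (hx2 : x < π / 2) :
    0 < 3 * sin x ^ 2 - x ^ 2 * (1 + 2 * cos x) := by
  have h2x : (0:ℝ) < 2 * x := by positivity
  have hπ : π < 3.15 := Real.pi_lt_d2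
  have hc2 : cos (2*x) ≤ 1 - (2*x) ^ 2 / 2 + (2*x) ^ 4 / 24 - (2*x) ^ 6 / 720 + (2*x) ^ 8 / 40320 :=
    c8 h2x.le
  have hc : cos x ≤ 1 - x ^ 2 / 2 + x ^ 4 / 24 := c4 hx.le
  have hcmul := mul_le_mul_of_nonneg_left hc (sq_nonneg x)
  have hx2sq : x ^ 2 ≤ 2.480625 := by nlinarith
  have h8 := mul_le_mul_of_nonneg_left hx2sq (pow_nonneg hx.le 6)
  have h6 := pow_pos hx 6
  have hcc : cos (2*x) = 1 - 2 * sin x ^ 2 := by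
    rw [Real.cos_two_mul]; linarith [Real.sin_sq_add_cos_sq x]
  rw [hcc] at hc2
  nlinarith [hc2, hcmul, h8, h6]

private lemma main_pos {x : ℝ} (hx : 0 < x) (hx2 : x < π / 2) :
    ((sin x / x) ^ 2 + tan x / x) / 2 > (sin x / x) ^ 2 * (tan x / x) ∧
      (sin x / x) ^ 2 * (tan x / x) > (2 * (sin x / x) + tan x / x) / 3 := by
  have hcos : 0 < cos x := Real.cos_pos_of_mem_Ioo ⟨by linarith [Real.pi_pos], hx2⟩
  have hsin : 0 < sin x := Real.sin_pos_of_pos_of_lt_pi hx (by linarith [Real.pi_gt_three])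
  have htan : tan x = sin x / cos x := Real.tan_eq_sin_div_cos x
  have hx0 : x ≠ 0 := hx.ne'
  have hc0 : cos x ≠ 0 := hcos.ne'
  have e1 : (sin x / x) ^ 2 * (tan x / x) = sin x ^ 3 / (x ^ 3 * cos x) := by
    rw [htan]; field_simp
  have hd : (0:ℝ) < x ^ 3 * cos x := by positivity
  constructor
  · have e2 : ((sin x / x) ^ 2 + tan x / x) / 2
        = (sin x ^ 2 * cos x * x + sin x * x ^ 2) / (2 * (x ^ 3 * cos x)) := by
      rw [htan]; field_simp
    rw [gt_iff_lt, e1, e2, div_lt_div_iff₀ hd (by positivity)]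
    nlinarith [coreA hx hx2, mul_pos hd hsin]
  · have e3 : (2 * (sin x / x) + tan x / x) / 3
        = (2 * sin x * cos x + sin x) * x ^ 2 / (3 * (x ^ 3 * cos x)) := by
      rw [htan]; field_simp
    rw [gt_iff_lt, e1, e3, div_lt_div_iff₀ (by positivity) hd]
    nlinarith [coreB hx hx2, mul_pos hd hsin]

theorem stmt_6 (x : ℝ) (h1 : 0 < |x|) (h2 : |x| < π / 2) :
    ((sin x / x) ^ 2 + tan x / x) / 2 > (sin x / x) ^ 2 * (tan x / x) ∧
      (sin x / x) ^ 2 * (tan x / x) > (2 * (sin x / x) + tan x / x) / 3 := by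
  rcases lt_trichotomy x 0 with hx | hx | hx
  · have hx' : 0 < -x := by linarith
    have h2' : -x < π / 2 := by rwa [abs_of_neg hx] at h2
    have hsx : sin x / x = sin (-x) / (-x) := by rw [Real.sin_neg, neg_div_neg_eq]
    have htx : tan x / x = tan (-x) / (-x) := by rw [Real.tan_neg, neg_div_neg_eq]
    rw [hsx, htx]
    exact main_pos hx' h2'
  · simp [hx] at h1
  · exact main_pos hx (by rwa [abs_of_pos hx] at h2)
end

section
/- For all real x with 0 < x < π/2, 2 + (8/45)·x^4 + (16/315)·x^5·tan x < (sin x/x)^2 + (tan x)/x < 2 + (8/45)·x^4 + (2/π)^6·x^5·tan x. -/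
set_option maxHeartbeats 1000000
open Real
lemma mono_aux {f f' : ℝ → ℝ} (hf : ∀ y, HasDerivAt f (f' y) y)
    (h' : ∀ y, 0 ≤ y → 0 ≤ f' y) {x : ℝ} (hx : 0 ≤ x) : f 0 ≤ f x := by
  have hmono : MonotoneOn f (Set.Ici 0) :=
    monotoneOn_of_deriv_nonneg (convex_Ici 0)
      (fun y _ => (hf y).continuousAt.continuousWithinAt)
      (fun y hy => (hf y).differentiableAt.differentiableWithinAt)
      (fun y hy => by
        rw [(hf y).deriv]
        rw [interior_Ici] at hy
        exact h' y hy.le)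
  exact hmono Set.self_mem_Ici hx hx

lemma cos_ge_deg2 {x : ℝ} (hx : 0 ≤ x) : 1 - x^2/2 ≤ cos x := by
  have h := mono_aux (f := fun y => cos y - (1 - y^2/2))
    (f' := fun y => (y) - sin y)
    (fun y => by
      have hp : HasDerivAt (fun y : ℝ => 1 - y^2/2) (-(y)) y := by
        have := (hasDerivAt_const y (1:ℝ)).sub ((hasDerivAt_pow 2 y).div_const 2)
        refine this.congr_deriv ?_
        all_goals (push_cast; ring)
      have h2 := (Real.hasDerivAt_cos y).sub hp
      refine h2.congr_deriv ?_
      all_goals ring)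
    (fun y hy => by linarith [Real.sin_le hy]) hx
  norm_num at h
  linarith

lemma sin_ge_deg3 {x : ℝ} (hx : 0 ≤ x) : x - x^3/6 ≤ sin x := by
  have h := mono_aux (f := fun y => sin y - (y - y^3/6))
    (f' := fun y => cos y - (1 - y^2/2))
    (fun y => by
      have hp : HasDerivAt (fun y : ℝ => y - y^3/6) (1 - y^2/2) y := by
        have := (hasDerivAt_id' y).sub ((hasDerivAt_pow 3 y).div_const 6)
        refine this.congr_deriv ?_
        all_goals (push_cast; ring)
      have h2 := (Real.hasDerivAt_sin y).sub hp
      refine h2.congr_deriv ?_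
      all_goals ring)
    (fun y hy => by linarith [cos_ge_deg2 hy]) hx
  norm_num at h
  linarith

lemma cos_le_deg4 {x : ℝ} (hx : 0 ≤ x) : cos x ≤ 1 - x^2/2 + x^4/24 := by
  have h := mono_aux (f := fun y => (1 - y^2/2 + y^4/24) - cos y)
    (f' := fun y => sin y - (y - y^3/6))
    (fun y => by
      have hp : HasDerivAt (fun y : ℝ => 1 - y^2/2 + y^4/24) (-(y - y^3/6)) y := by
        have := ((hasDerivAt_const y (1:ℝ)).sub ((hasDerivAt_pow 2 y).div_const 2)).add ((hasDerivAt_pow 4 y).div_const 24)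
        refine this.congr_deriv ?_
        all_goals (push_cast; ring)
      have h2 := hp.sub (Real.hasDerivAt_cos y)
      refine h2.congr_deriv ?_
      all_goals ring)
    (fun y hy => by linarith [sin_ge_deg3 hy]) hx
  norm_num at h
  linarith

lemma sin_le_deg5 {x : ℝ} (hx : 0 ≤ x) : sin x ≤ x - x^3/6 + x^5/120 := by
  have h := mono_aux (f := fun y => (y - y^3/6 + y^5/120) - sin y)
    (f' := fun y => (1 - y^2/2 + y^4/24) - cos y)
    (fun y => by
      have hp : HasDerivAt (fun y : ℝ => y - y^3/6 + y^5/120) (1 - y^2/2 + y^4/24) y := by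
        have := ((hasDerivAt_id' y).sub ((hasDerivAt_pow 3 y).div_const 6)).add ((hasDerivAt_pow 5 y).div_const 120)
        refine this.congr_deriv ?_
        all_goals (push_cast; ring)
      have h2 := hp.sub (Real.hasDerivAt_sin y)
      refine h2.congr_deriv ?_
      all_goals ring)
    (fun y hy => by linarith [cos_le_deg4 hy]) hx
  norm_num at h
  linarith

lemma cos_ge_deg6 {x : ℝ} (hx : 0 ≤ x) : 1 - x^2/2 + x^4/24 - x^6/720 ≤ cos x := by
  have h := mono_aux (f := fun y => cos y - (1 - y^2/2 + y^4/24 - y^6/720))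
    (f' := fun y => (y - y^3/6 + y^5/120) - sin y)
    (fun y => by
      have hp : HasDerivAt (fun y : ℝ => 1 - y^2/2 + y^4/24 - y^6/720) (-(y - y^3/6 + y^5/120)) y := by
        have := (((hasDerivAt_const y (1:ℝ)).sub ((hasDerivAt_pow 2 y).div_const 2)).add ((hasDerivAt_pow 4 y).div_const 24)).sub ((hasDerivAt_pow 6 y).div_const 720)
        refine this.congr_deriv ?_
        all_goals (push_cast; ring)
      have h2 := (Real.hasDerivAt_cos y).sub hp
      refine h2.congr_deriv ?_
      all_goals ring)
    (fun y hy => by linarith [sin_le_deg5 hy]) hx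
  norm_num at h
  linarith

lemma sin_ge_deg7 {x : ℝ} (hx : 0 ≤ x) : x - x^3/6 + x^5/120 - x^7/5040 ≤ sin x := by
  have h := mono_aux (f := fun y => sin y - (y - y^3/6 + y^5/120 - y^7/5040))
    (f' := fun y => cos y - (1 - y^2/2 + y^4/24 - y^6/720))
    (fun y => by
      have hp : HasDerivAt (fun y : ℝ => y - y^3/6 + y^5/120 - y^7/5040) (1 - y^2/2 + y^4/24 - y^6/720) y := by
        have := (((hasDerivAt_id' y).sub ((hasDerivAt_pow 3 y).div_const 6)).add ((hasDerivAt_pow 5 y).div_const 120)).sub ((hasDerivAt_pow 7 y).div_const 5040)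
        refine this.congr_deriv ?_
        all_goals (push_cast; ring)
      have h2 := (Real.hasDerivAt_sin y).sub hp
      refine h2.congr_deriv ?_
      all_goals ring)
    (fun y hy => by linarith [cos_ge_deg6 hy]) hx
  norm_num at h
  linarith

lemma cos_le_deg8 {x : ℝ} (hx : 0 ≤ x) : cos x ≤ 1 - x^2/2 + x^4/24 - x^6/720 + x^8/40320 := by
  have h := mono_aux (f := fun y => (1 - y^2/2 + y^4/24 - y^6/720 + y^8/40320) - cos y)
    (f' := fun y => sin y - (y - y^3/6 + y^5/120 - y^7/5040))
    (fun y => by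
      have hp : HasDerivAt (fun y : ℝ => 1 - y^2/2 + y^4/24 - y^6/720 + y^8/40320) (-(y - y^3/6 + y^5/120 - y^7/5040)) y := by
        have := ((((hasDerivAt_const y (1:ℝ)).sub ((hasDerivAt_pow 2 y).div_const 2)).add ((hasDerivAt_pow 4 y).div_const 24)).sub ((hasDerivAt_pow 6 y).div_const 720)).add ((hasDerivAt_pow 8 y).div_const 40320)
        refine this.congr_deriv ?_
        all_goals (push_cast; ring)
      have h2 := hp.sub (Real.hasDerivAt_cos y)
      refine h2.congr_deriv ?_
      all_goals ring)
    (fun y hy => by linarith [sin_ge_deg7 hy]) hx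
  norm_num at h
  linarith

lemma sin_le_deg9 {x : ℝ} (hx : 0 ≤ x) : sin x ≤ x - x^3/6 + x^5/120 - x^7/5040 + x^9/362880 := by
  have h := mono_aux (f := fun y => (y - y^3/6 + y^5/120 - y^7/5040 + y^9/362880) - sin y)
    (f' := fun y => (1 - y^2/2 + y^4/24 - y^6/720 + y^8/40320) - cos y)
    (fun y => by
      have hp : HasDerivAt (fun y : ℝ => y - y^3/6 + y^5/120 - y^7/5040 + y^9/362880) (1 - y^2/2 + y^4/24 - y^6/720 + y^8/40320) y := by
        have := ((((hasDerivAt_id' y).sub ((hasDerivAt_pow 3 y).div_const 6)).add ((hasDerivAt_pow 5 y).div_const 120)).sub ((hasDerivAt_pow 7 y).div_const 5040)).add ((hasDerivAt_pow 9 y).div_const 362880)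
        refine this.congr_deriv ?_
        all_goals (push_cast; ring)
      have h2 := hp.sub (Real.hasDerivAt_sin y)
      refine h2.congr_deriv ?_
      all_goals ring)
    (fun y hy => by linarith [cos_le_deg8 hy]) hx
  norm_num at h
  linarith

lemma cos_ge_deg10 {x : ℝ} (hx : 0 ≤ x) : 1 - x^2/2 + x^4/24 - x^6/720 + x^8/40320 - x^10/3628800 ≤ cos x := by
  have h := mono_aux (f := fun y => cos y - (1 - y^2/2 + y^4/24 - y^6/720 + y^8/40320 - y^10/3628800))
    (f' := fun y => (y - y^3/6 + y^5/120 - y^7/5040 + y^9/362880) - sin y)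
    (fun y => by
      have hp : HasDerivAt (fun y : ℝ => 1 - y^2/2 + y^4/24 - y^6/720 + y^8/40320 - y^10/3628800) (-(y - y^3/6 + y^5/120 - y^7/5040 + y^9/362880)) y := by
        have := (((((hasDerivAt_const y (1:ℝ)).sub ((hasDerivAt_pow 2 y).div_const 2)).add ((hasDerivAt_pow 4 y).div_const 24)).sub ((hasDerivAt_pow 6 y).div_const 720)).add ((hasDerivAt_pow 8 y).div_const 40320)).sub ((hasDerivAt_pow 10 y).div_const 3628800)
        refine this.congr_deriv ?_
        all_goals (push_cast; ring)
      have h2 := (Real.hasDerivAt_cos y).sub hp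
      refine h2.congr_deriv ?_
      all_goals ring)
    (fun y hy => by linarith [sin_le_deg9 hy]) hx
  norm_num at h
  linarith

lemma sin_ge_deg11 {x : ℝ} (hx : 0 ≤ x) : x - x^3/6 + x^5/120 - x^7/5040 + x^9/362880 - x^11/39916800 ≤ sin x := by
  have h := mono_aux (f := fun y => sin y - (y - y^3/6 + y^5/120 - y^7/5040 + y^9/362880 - y^11/39916800))
    (f' := fun y => cos y - (1 - y^2/2 + y^4/24 - y^6/720 + y^8/40320 - y^10/3628800))
    (fun y => by
      have hp : HasDerivAt (fun y : ℝ => y - y^3/6 + y^5/120 - y^7/5040 + y^9/362880 - y^11/39916800) (1 - y^2/2 + y^4/24 - y^6/720 + y^8/40320 - y^10/3628800) y := by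
        have := (((((hasDerivAt_id' y).sub ((hasDerivAt_pow 3 y).div_const 6)).add ((hasDerivAt_pow 5 y).div_const 120)).sub ((hasDerivAt_pow 7 y).div_const 5040)).add ((hasDerivAt_pow 9 y).div_const 362880)).sub ((hasDerivAt_pow 11 y).div_const 39916800)
        refine this.congr_deriv ?_
        all_goals (push_cast; ring)
      have h2 := (Real.hasDerivAt_sin y).sub hp
      refine h2.congr_deriv ?_
      all_goals ring)
    (fun y hy => by linarith [cos_ge_deg10 hy]) hx
  norm_num at h
  linarith

lemma cos_le_deg12 {x : ℝ} (hx : 0 ≤ x) : cos x ≤ 1 - x^2/2 + x^4/24 - x^6/720 + x^8/40320 - x^10/3628800 + x^12/479001600 := by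
  have h := mono_aux (f := fun y => (1 - y^2/2 + y^4/24 - y^6/720 + y^8/40320 - y^10/3628800 + y^12/479001600) - cos y)
    (f' := fun y => sin y - (y - y^3/6 + y^5/120 - y^7/5040 + y^9/362880 - y^11/39916800))
    (fun y => by
      have hp : HasDerivAt (fun y : ℝ => 1 - y^2/2 + y^4/24 - y^6/720 + y^8/40320 - y^10/3628800 + y^12/479001600) (-(y - y^3/6 + y^5/120 - y^7/5040 + y^9/362880 - y^11/39916800)) y := by
        have := ((((((hasDerivAt_const y (1:ℝ)).sub ((hasDerivAt_pow 2 y).div_const 2)).add ((hasDerivAt_pow 4 y).div_const 24)).sub ((hasDerivAt_pow 6 y).div_const 720)).add ((hasDerivAt_pow 8 y).div_const 40320)).sub ((hasDerivAt_pow 10 y).div_const 3628800)).add ((hasDerivAt_pow 12 y).div_const 479001600)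
        refine this.congr_deriv ?_
        all_goals (push_cast; ring)
      have h2 := hp.sub (Real.hasDerivAt_cos y)
      refine h2.congr_deriv ?_
      all_goals ring)
    (fun y hy => by linarith [sin_ge_deg11 hy]) hx
  norm_num at h
  linarith


theorem stmt_8 (x : ℝ) (h1 : 0 < x) (h2 : x < π / 2) :
    2 + (8 / 45) * x ^ 4 + (16 / 315) * x ^ 5 * tan x < (sin x / x) ^ 2 + tan x / x ∧
      (sin x / x) ^ 2 + tan x / x < 2 + (8 / 45) * x ^ 4 + (2 / π) ^ 6 * x ^ 5 * tan x := by
  have hx0 : (0:ℝ) ≤ x := h1.le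
  have hπu : π < 3.141593 := Real.pi_lt_d6
  have hπl : 3.141592 < π := Real.pi_gt_d6
  have hπ0 : 0 < π := Real.pi_pos
  have hxlt : x < 1.5707965 := by linarith
  have hcos : 0 < cos x := Real.cos_pos_of_mem_Ioo ⟨by linarith, h2⟩
  have hsin : 0 < sin x := Real.sin_pos_of_pos_of_lt_pi h1 (by linarith)
  have htan : tan x = sin x / cos x := Real.tan_eq_sin_div_cos x
  have hsin3 : sin x ^ 2 * cos x = cos x / 4 - cos (3*x) / 4 := by
    have hs : sin x ^ 2 = 1 - cos x ^ 2 := by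
      have := Real.sin_sq_add_cos_sq x; linarith
    rw [hs, Real.cos_three_mul]; ring
  have expand : (sin x / x) ^ 2 + tan x / x = (sin x ^ 2 + x * tan x) / x ^ 2 := by
    field_simp
  constructor
  · -- lower bound
    have key1 : 0 < sin x ^ 2 * cos x + x * sin x - 2*x^2*cos x - (8/45)*x^6*cos x
        - (16/315)*x^7*sin x := by
      rw [hsin3]
      have hQ : 0 < 9211/1814400*x^10 - 149161/212889600*x^12 := by
        have h10 : 0 < x^10 := pow_pos h1 10
        have hx2 : x^2 < 2.46741 := by nlinarith
        have hpos : (0:ℝ) < 9211/1814400 - 149161/212889600*x^2 := by nlinarith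
        nlinarith [mul_pos h10 hpos]
      have b1 := cos_ge_deg10 hx0
      have b2 := cos_le_deg12 (x := 3*x) (by linarith)
      have b3 := sin_ge_deg7 hx0
      have b4 := cos_le_deg8 hx0
      have b5 := cos_le_deg4 hx0
      have b6 := sin_le_deg5 hx0
      have t3 : x * (x - x^3/6 + x^5/120 - x^7/5040) ≤ x * sin x :=
        mul_le_mul_of_nonneg_left b3 hx0
      have t4 : 2*x^2 * cos x ≤ 2*x^2 * (1 - x^2/2 + x^4/24 - x^6/720 + x^8/40320) :=
        mul_le_mul_of_nonneg_left b4 (by positivity)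
      have t5 : (8/45)*x^6 * cos x ≤ (8/45)*x^6 * (1 - x^2/2 + x^4/24) :=
        mul_le_mul_of_nonneg_left b5 (by positivity)
      have t6 : (16/315)*x^7 * sin x ≤ (16/315)*x^7 * (x - x^3/6 + x^5/120) :=
        mul_le_mul_of_nonneg_left b6 (by positivity)
      linarith [b1, b2, t3, t4, t5, t6, hQ]
    have key1t : 0 < sin x ^ 2 + x * tan x - 2*x^2 - (8/45)*x^6 - (16/315)*x^7*tan x := by
      rw [htan]
      have e : sin x ^ 2 + x * (sin x/cos x) - 2*x^2 - (8/45)*x^6 - (16/315)*x^7*(sin x/cos x)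
          = (sin x ^ 2 * cos x + x * sin x - 2*x^2*cos x - (8/45)*x^6*cos x
            - (16/315)*x^7*sin x) / cos x := by
        field_simp
      rw [e]
      exact div_pos key1 hcos
    rw [expand, lt_div_iff₀ (by positivity : (0:ℝ) < x^2)]
    linarith [key1t]
  · -- upper bound
    by_cases hc : x ≤ 1.4
    · -- polynomial regime
      have hc6 : (1661/25000 : ℝ) < (2/π)^6 := by
        have hπ2 : π^2 < 9.86961 := by nlinarith
        have hπ6 : π^6 < 963 := by nlinarith [sq_nonneg (π^2), sq_nonneg π]
        have h6 : (2/π)^6 = 64/π^6 := by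
          rw [div_pow]; norm_num
        rw [h6, lt_div_iff₀ (by positivity)]
        nlinarith
      have keyA : 0 < 2*x^2*cos x + (8/45)*x^6*cos x + (1661/25000)*x^7*sin x
          - sin x ^ 2 * cos x - x * sin x := by
        rw [hsin3]
        have hHm : 0 < 24643/1575000*x^8 - 72643/9450000*x^10
            + 52382489/171072000000*x^12 - 1661/126000000*x^14 := by
          have hu : x^2 ≤ 1.96 := by nlinarith
          have h8 : 0 < x^8 := pow_pos h1 8
          have c1 : (0:ℝ) < 24643/1575000 - 72643/9450000*x^2 := by nlinarith
          have c2 : (0:ℝ) ≤ 52382489/171072000000 - 1661/126000000*x^2 := by nlinarith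
          nlinarith [mul_pos h8 c1, mul_nonneg (pow_nonneg hx0 12) c2]
        have b1 := cos_ge_deg10 hx0
        have b2 := cos_ge_deg6 hx0
        have b3 := sin_ge_deg7 hx0
        have b4 := cos_le_deg12 hx0
        have b5 := cos_ge_deg10 (x := 3*x) (by linarith)
        have b6 := sin_le_deg9 hx0
        have t1 : 2*x^2 * (1 - x^2/2 + x^4/24 - x^6/720 + x^8/40320 - x^10/3628800) ≤ 2*x^2*cos x :=
          mul_le_mul_of_nonneg_left b1 (by positivity)
        have t2 : (8/45)*x^6 * (1 - x^2/2 + x^4/24 - x^6/720) ≤ (8/45)*x^6*cos x :=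
          mul_le_mul_of_nonneg_left b2 (by positivity)
        have t3 : (1661/25000)*x^7 * (x - x^3/6 + x^5/120 - x^7/5040) ≤ (1661/25000)*x^7*sin x :=
          mul_le_mul_of_nonneg_left b3 (by positivity)
        have t6 : x * sin x ≤ x * (x - x^3/6 + x^5/120 - x^7/5040 + x^9/362880) :=
          mul_le_mul_of_nonneg_left b6 hx0
        linarith [b4, b5, t1, t2, t3, t6, hHm]
      have keyA' : 0 < 2*x^2*cos x + (8/45)*x^6*cos x + (2/π)^6*x^7*sin x
          - sin x ^ 2 * cos x - x * sin x := by
        have hmono : (1661/25000)*x^7*sin x ≤ (2/π)^6*x^7*sin x := by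
          have h7 : (0:ℝ) < x^7 * sin x := by positivity
          nlinarith [h7, hc6]
        linarith
      have keyAt : 0 < 2*x^2 + (8/45)*x^6 + (2/π)^6*x^7*tan x - sin x ^ 2 - x * tan x := by
        rw [htan]
        have e : 2*x^2 + (8/45)*x^6 + (2/π)^6*x^7*(sin x/cos x) - sin x ^ 2 - x * (sin x/cos x)
            = (2*x^2*cos x + (8/45)*x^6*cos x + (2/π)^6*x^7*sin x
              - sin x ^ 2 * cos x - x * sin x) / cos x := by
          field_simp
        rw [e]
        exact div_pos keyA' hcos
      rw [expand, div_lt_iff₀ (by positivity : (0:ℝ) < x^2)]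
      linarith [keyAt]
    · -- tail regime
      push_neg at hc
      have htx : 0 < tan x := Real.tan_pos_of_pos_of_lt_pi_div_two h1 h2
      have hyp : 0 < π/2 - x := by linarith
      have htlt : tan x * (π/2 - x) < 1 := by
        have hl := Real.lt_tan hyp (by linarith)
        rw [Real.tan_pi_div_two_sub] at hl
        calc tan x * (π/2 - x) < tan x * (tan x)⁻¹ :=
              mul_lt_mul_of_pos_left hl htx
          _ = 1 := mul_inv_cancel₀ (ne_of_gt htx)
      have htub : tan x < 1/(π/2 - x) := by
        rw [lt_div_iff₀ hyp]; linarith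
      have ht6 : 0 < 1 - (2/π)^6 * x^6 := by
        have h2xπ : 2*x/π < 1 := by rw [div_lt_one hπ0]; linarith
        have h2xπ0 : 0 ≤ 2*x/π := by positivity
        have hp6 := pow_lt_one₀ h2xπ0 h2xπ (by norm_num : (6:ℕ) ≠ 0)
        have e : (2/π)^6 * x^6 = (2*x/π)^6 := by
          rw [div_pow, div_pow]; ring
        rw [e]
        linarith
      have hmul : 0 < x * (1 - (2/π)^6*x^6) := mul_pos h1 ht6
      have hmain : x * tan x * (1 - (2/π)^6*x^6)
          < (2*x/π) + (2*x/π)^2 + (2*x/π)^3 + (2*x/π)^4 + (2*x/π)^5 + (2*x/π)^6 := by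
        have e3 : x * (1 - (2/π)^6*x^6) / (π/2 - x)
            = (2*x/π) + (2*x/π)^2 + (2*x/π)^3 + (2*x/π)^4 + (2*x/π)^5 + (2*x/π)^6 := by
          rw [div_eq_iff (ne_of_gt hyp)]
          field_simp
          ring
        calc x * tan x * (1 - (2/π)^6*x^6) = tan x * (x * (1 - (2/π)^6*x^6)) := by ring
          _ < (1/(π/2-x)) * (x * (1 - (2/π)^6*x^6)) := mul_lt_mul_of_pos_right htub hmul
          _ = x * (1 - (2/π)^6*x^6) / (π/2 - x) := by ring
          _ = _ := e3
      have hd : 2*x/π ≤ 2*x/3.141592 := by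
        rw [div_le_div_iff₀ hπ0 (by norm_num)]
        nlinarith
      have hd0 : (0:ℝ) ≤ 2*x/π := by positivity
      have hsum : (2*x/π) + (2*x/π)^2 + (2*x/π)^3 + (2*x/π)^4 + (2*x/π)^5 + (2*x/π)^6
          ≤ (2*x/3.141592) + (2*x/3.141592)^2 + (2*x/3.141592)^3 + (2*x/3.141592)^4
            + (2*x/3.141592)^5 + (2*x/3.141592)^6 := by
        have p2 := pow_le_pow_left₀ hd0 hd 2
        have p3 := pow_le_pow_left₀ hd0 hd 3
        have p4 := pow_le_pow_left₀ hd0 hd 4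
        have p5 := pow_le_pow_left₀ hd0 hd 5
        have p6 := pow_le_pow_left₀ hd0 hd 6
        linarith
      have hpoly : (2*x/3.141592) + (2*x/3.141592)^2 + (2*x/3.141592)^3 + (2*x/3.141592)^4
            + (2*x/3.141592)^5 + (2*x/3.141592)^6 ≤ 2*x^2 + (8/45)*x^6 - 1 := by
        have h14 : (0:ℝ) ≤ x - 1.4 := by linarith
        have hb : (2*x/3.141592) ≤ 0.63662 * x := by
          rw [div_le_iff₀ (by norm_num : (0:ℝ) < 3.141592)]
          nlinarith
        have h0 : (0:ℝ) ≤ 2*x/3.141592 := by positivity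
        have e : ∀ k : ℕ, (2*x/3.141592)^k ≤ (0.63662)^k * x^k := by
          intro k
          calc (2*x/3.141592)^k ≤ (0.63662*x)^k := pow_le_pow_left₀ h0 hb k
            _ = (0.63662)^k * x^k := by rw [mul_pow]
        have e2 := e 2; have e3 := e 3; have e4 := e 4; have e5 := e 5; have e6 := e 6
        norm_num at e2 e3 e4 e5 e6 ⊢
        nlinarith [h14, pow_nonneg h14 2, pow_nonneg h14 3, pow_nonneg h14 4,
          pow_nonneg h14 5, pow_nonneg h14 6]
      have hs1 : sin x ^ 2 ≤ 1 := by
        nlinarith [Real.sin_le_one x, Real.neg_one_le_sin x]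
      rw [expand, div_lt_iff₀ (by positivity : (0:ℝ) < x^2)]
      linarith [hmain, hsum, hpoly, hs1]
end
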